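/- Let l(x) denote the unique positive number satisfying l(x)²·f'(x² + l(x)²) = 2(n−1). Then x ↦ l(x) is differentiable on ℝ with l'(x) = − 4(n−1)·x·f''(x² + l(x)²) / ( 2·l(x)·f'(x² + l(x)²)² + 4(n−1)·l(x)·f''(x² + l(x)²) ); in particular l'(x) ≤ 0 for all x ≥ 0, so l is nonincreasing on [0, +∞). -/

import Mathlib

/-- The curve `l(x)` defined by `l(x)² f'(x² + l(x)²) = 2(n−1)` is differentiable with
`l'(x) = −4(n−1) x f'' / (2 l (f')² + 4(n−1) l f'')`; in particular `l' ≤ 0` on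
`[0, +∞)`, so `l` is nonincreasing there. -/
theorem derivative_of_l
    (n : ℕ) (hn : 2 ≤ n) (m M : ℝ) (hm : 0 < m) (hmM : m ≤ M)
    (f : ℝ → ℝ) (hf : ContDiff ℝ 2 f)
    (hconv : ∀ s : ℝ, 0 ≤ deriv (deriv f) s)
    (hlow : ∀ s : ℝ, m ≤ deriv f s) (hup : ∀ s : ℝ, deriv f s ≤ M)
    (l : ℝ → ℝ) (hl : ∀ x : ℝ, 0 < l x)
    (hroot : ∀ x : ℝ, (l x) ^ 2 * deriv f (x ^ 2 + (l x) ^ 2) = 2 * ((n : ℝ) - 1)) :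
    (∀ x : ℝ, HasDerivAt l
      (-(4 * ((n : ℝ) - 1) * x * deriv (deriv f) (x ^ 2 + (l x) ^ 2)) /
        (2 * l x * (deriv f (x ^ 2 + (l x) ^ 2)) ^ 2
          + 4 * ((n : ℝ) - 1) * l x * deriv (deriv f) (x ^ 2 + (l x) ^ 2))) x) ∧
    (∀ x : ℝ, 0 ≤ x → deriv l x ≤ 0) ∧
    AntitoneOn l (Set.Ici 0) := by
  set c : ℝ := 2 * ((n : ℝ) - 1) with hc_def
  have hn2 : (2 : ℝ) ≤ (n : ℝ) := by exact_mod_cast hn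
  have hc : 0 < c := by simp only [hc_def]; linarith
  have hA : ∀ s, 0 < deriv f s := fun s => lt_of_lt_of_le hm (hlow s)
  -- f' is C¹
  have hf1 : ContDiff ℝ 1 (deriv f) := by
    have := (contDiff_succ_iff_deriv (n := 1)).1 (by exact_mod_cast hf)
    exact this.2.2
  have hd2 : ∀ s, HasDerivAt (deriv f) (deriv (deriv f) s) s :=
    fun s => ((hf1.differentiable one_ne_zero) s).hasDerivAt
  -- the auxiliary strictly increasing function Φ
  set Φ : ℝ → ℝ := fun w => w - c / deriv f w with hΦ_def
  set Φ' : ℝ → ℝ := fun w => 1 + c * deriv (deriv f) w / (deriv f w) ^ 2 with hΦ'_def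
  have hΦ'pos : ∀ w, 0 < Φ' w := by
    intro w
    have h1 : 0 ≤ c * deriv (deriv f) w / (deriv f w) ^ 2 :=
      div_nonneg (mul_nonneg hc.le (hconv w)) (by positivity)
    simp only [hΦ'_def]; linarith
  have hΦd : ∀ w, HasDerivAt Φ (Φ' w) w := by
    intro w
    have h := (hasDerivAt_id w).sub ((hasDerivAt_const w c).div (hd2 w) (hA w).ne')
    refine (h.congr_deriv ?_).congr_of_eventuallyEq (Filter.Eventually.of_forall fun y => rfl)
    show _ = 1 + c * deriv (deriv f) w / (deriv f w) ^ 2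
    ring
  have hΦmono : StrictMono Φ :=
    strictMono_of_deriv_pos fun w => by rw [(hΦd w).deriv]; exact hΦ'pos w
  have hΦcont : Continuous Φ := by
    have : Continuous (deriv f) := hf1.continuous
    exact continuous_id.sub (continuous_const.div this fun w => (hA w).ne')
  have hΦsurj : Function.Surjective Φ := by
    apply hΦcont.surjective
    · apply Filter.tendsto_atTop_mono (f := fun w => w - c / m) ?_ ?_
      · intro w
        have : c / deriv f w ≤ c / m := div_le_div_of_nonneg_left hc.le hm (hlow w)
        simp only [hΦ_def]; linarith
      · exact Filter.tendsto_atTop_add_const_right _ _ Filter.tendsto_id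
    · apply Filter.tendsto_atBot_mono (f := fun w => w) ?_ ?_
      · intro w
        have : 0 < c / deriv f w := div_pos hc (hA w)
        simp only [hΦ_def]; linarith
      · exact Filter.tendsto_id
  set e : ℝ ≃o ℝ := StrictMono.orderIsoOfSurjective Φ hΦmono hΦsurj with he_def
  have he_apply : ∀ w, e w = Φ w := fun w => rfl
  have hesymm_cont : Continuous e.symm := e.symm.toHomeomorph.continuous
  -- the key identity Φ (x² + l x²) = x²
  have hkey : ∀ x : ℝ, Φ (x ^ 2 + (l x) ^ 2) = x ^ 2 := by
    intro x
    have hr := hroot x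
    have hAx := (hA (x ^ 2 + (l x) ^ 2)).ne'
    simp only [hΦ_def]
    rw [← hr]
    field_simp
    ring
  have hg_eq : ∀ x : ℝ, x ^ 2 + (l x) ^ 2 = e.symm (x ^ 2) := by
    intro x
    apply e.injective
    rw [OrderIso.apply_symm_apply, he_apply, hkey]
  -- derivative of e.symm
  have hesymm_deriv : ∀ y : ℝ, HasDerivAt e.symm (Φ' (e.symm y))⁻¹ y := by
    intro y
    apply HasDerivAt.of_local_left_inverse (hesymm_cont.continuousAt)
      (hΦd (e.symm y)) (hΦ'pos _).ne'
    filter_upwards with z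
    have : Φ (e.symm z) = e (e.symm z) := (he_apply _).symm
    rw [this, OrderIso.apply_symm_apply]
  -- main derivative statement
  have main : ∀ x : ℝ, HasDerivAt l
      (-(4 * ((n : ℝ) - 1) * x * deriv (deriv f) (x ^ 2 + (l x) ^ 2)) /
        (2 * l x * (deriv f (x ^ 2 + (l x) ^ 2)) ^ 2
          + 4 * ((n : ℝ) - 1) * l x * deriv (deriv f) (x ^ 2 + (l x) ^ 2))) x := by
    intro x
    set s := x ^ 2 + (l x) ^ 2 with hs_def
    have hsq : HasDerivAt (fun y : ℝ => y ^ 2) (2 * x) x := by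
      simpa using hasDerivAt_pow 2 x
    have hg : HasDerivAt (fun y => y ^ 2 + (l y) ^ 2) ((Φ' s)⁻¹ * (2 * x)) x := by
      have := (hesymm_deriv (x ^ 2)).comp x hsq
      rw [← hg_eq x] at this
      simp only [Function.comp_def] at this
      have heq : (fun y => e.symm (y ^ 2)) = fun y => y ^ 2 + (l y) ^ 2 := by
        funext y; rw [hg_eq y]
      rwa [heq] at this
    have hl2 : HasDerivAt (fun y => (l y) ^ 2) ((Φ' s)⁻¹ * (2 * x) - 2 * x) x := by
      have := hg.sub hsq
      exact this.congr_of_eventuallyEq (Filter.Eventually.of_forall fun y => by simp)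
    have hlsqrt : HasDerivAt l
        (((Φ' s)⁻¹ * (2 * x) - 2 * x) / (2 * Real.sqrt ((l x) ^ 2))) x := by
      have h := hl2.sqrt (pow_ne_zero 2 (hl x).ne')
      have heq : (fun y => Real.sqrt ((l y) ^ 2)) = l := by
        funext y; rw [Real.sqrt_sq (hl y).le]
      rwa [heq] at h
    rw [Real.sqrt_sq (hl x).le] at hlsqrt
    convert hlsqrt using 1
    set A := deriv f s
    set B := deriv (deriv f) s
    have hApos : 0 < A := hA s
    have hLpos : 0 < l x := hl x
    have hABpos : 0 < A ^ 2 + c * B := by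
      have := hconv s
      nlinarith
    have hΦ's : Φ' s = (A ^ 2 + c * B) / A ^ 2 := by
      simp only [hΦ'_def]
      show 1 + c * B / A ^ 2 = _
      field_simp [hApos.ne']
    have hinv : (Φ' s)⁻¹ = A ^ 2 / (A ^ 2 + c * B) := by rw [hΦ's, inv_div]
    rw [hinv]
    have h2c : (4 : ℝ) * ((n : ℝ) - 1) = 2 * c := by rw [hc_def]; ring
    simp only [h2c]
    rw [div_eq_div_iff (by nlinarith) (by positivity)]
    field_simp [hABpos.ne']
    ring
  refine ⟨main, ?_, ?_⟩
  · intro x hx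
    rw [(main x).deriv]
    apply div_nonpos_of_nonpos_of_nonneg
    · have : 0 ≤ 4 * ((n : ℝ) - 1) * x * deriv (deriv f) (x ^ 2 + (l x) ^ 2) := by
        apply mul_nonneg (mul_nonneg (by linarith) hx) (hconv _)
      linarith
    · have h1 : 0 < 2 * l x * (deriv f (x ^ 2 + (l x) ^ 2)) ^ 2 := by
        have := hA (x ^ 2 + (l x) ^ 2); have := hl x; positivity
      have h2 : 0 ≤ 4 * ((n : ℝ) - 1) * l x * deriv (deriv f) (x ^ 2 + (l x) ^ 2) := by
        apply mul_nonneg (mul_nonneg (by linarith) (hl x).le) (hconv _)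
      linarith
  · apply antitoneOn_of_deriv_nonpos (convex_Ici 0)
    · exact Continuous.continuousOn (by
        have : Differentiable ℝ l := fun x => (main x).differentiableAt
        exact this.continuous)
    · intro x _
      exact ((main x).differentiableAt).differentiableWithinAt
    · intro x hx
      rw [interior_Ici] at hx
      rw [(main x).deriv]
      apply div_nonpos_of_nonpos_of_nonneg
      · have : 0 ≤ 4 * ((n : ℝ) - 1) * x * deriv (deriv f) (x ^ 2 + (l x) ^ 2) :=
          mul_nonneg (mul_nonneg (by linarith) (le_of_lt hx)) (hconv _)
        linarith
      · have h1 : 0 < 2 * l x * (deriv f (x ^ 2 + (l x) ^ 2)) ^ 2 := by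
          have := hA (x ^ 2 + (l x) ^ 2); have := hl x; positivity
        have h2 : 0 ≤ 4 * ((n : ℝ) - 1) * l x * deriv (deriv f) (x ^ 2 + (l x) ^ 2) :=
          mul_nonneg (mul_nonneg (by linarith) (hl x).le) (hconv _)
        linarith
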